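/- For (λ,μ) ∈ J*_{m,ℓ} and (η,ν) ∈ J*_{m',ℓ'}, the following are equivalent: (a) C_T = C_S for some standard tableaux T on λ/μ^ and S on η/ν^; (b) m = m', ℓ = ℓ', and λ/μ^ = η/ν^ + (r,r) for some r ∈ ℤ; (c) m = m', ℓ = ℓ', and (η,ν) = ω_m^r·(λ,μ) for some r ∈ ℤ. -/

import Mathlib

/-- The periodic skew diagram `λ/μ^` attached to `(λ,μ)` (rows are indexed
`1,…,m`, with the `0`-indexed data `lam i = λ_{i+1}`, `mu i = μ_{i+1}`):
`λ/μ^ = ⋃_{k∈ℤ} (λ/μ + k(m,-ℓ))`. -/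
def hatD (m ℓ : ℕ) (lam mu : ℕ → ℤ) : Set (ℤ × ℤ) :=
  {p | ∃ (k : ℤ) (i : ℕ), i < m ∧ p.1 = (i : ℤ) + 1 + k * m ∧
        mu i + 1 ≤ p.2 + k * ℓ ∧ p.2 + k * ℓ ≤ lam i}

/-- `v ∈ P̂⁺_{m,ℓ}`: weakly decreasing with spread at most `ℓ`. -/
def isDom (m ℓ : ℕ) (v : ℕ → ℤ) : Prop :=
  (∀ i j : ℕ, i ≤ j → j < m → v j ≤ v i) ∧ v 0 - v (m - 1) ≤ (ℓ : ℤ)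

/-- `(λ,μ) ∈ 𝒥_{m,ℓ}`. -/
def memJ (n m ℓ : ℕ) (lam mu : ℕ → ℤ) : Prop :=
  1 ≤ m ∧ isDom m ℓ lam ∧ isDom m ℓ mu ∧ (∀ i < m, mu i ≤ lam i) ∧
    (∑ i ∈ Finset.range m, (lam i - mu i)) = (n : ℤ)

/-- `(λ,μ) ∈ 𝒥*_{m,ℓ}` (no empty rows: `λ_i > μ_i`). -/
def memJstar (n m ℓ : ℕ) (lam mu : ℕ → ℤ) : Prop :=
  1 ≤ m ∧ isDom m ℓ lam ∧ isDom m ℓ mu ∧ (∀ i < m, mu i < lam i) ∧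
    (∑ i ∈ Finset.range m, (lam i - mu i)) = (n : ℤ)

/-- A tableau on the (`(m,-ℓ)`-periodic) diagram `Λ`: a bijection `Λ → ℤ`
with `T(u + (m,-ℓ)) = T(u) + n`. -/
def IsTab (n m ℓ : ℕ) (Λ : Set (ℤ × ℤ)) (T : ℤ × ℤ → ℤ) : Prop :=
  Set.BijOn T Λ Set.univ ∧ ∀ u ∈ Λ, T (u + ((m : ℤ), -(ℓ : ℤ))) = T u + (n : ℤ)

/-- Row increasing. -/
def RowInc (Λ : Set (ℤ × ℤ)) (T : ℤ × ℤ → ℤ) : Prop :=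
  ∀ a b : ℤ, (a, b) ∈ Λ → (a, b + 1) ∈ Λ → T (a, b) < T (a, b + 1)

/-- Column increasing. -/
def ColInc (Λ : Set (ℤ × ℤ)) (T : ℤ × ℤ → ℤ) : Prop :=
  ∀ a b : ℤ, (a, b) ∈ Λ → (a + 1, b) ∈ Λ → T (a, b) < T (a + 1, b)

/-- A standard (row-column increasing) tableau. -/
def IsStdTab (n m ℓ : ℕ) (Λ : Set (ℤ × ℤ)) (T : ℤ × ℤ → ℤ) : Prop :=
  IsTab n m ℓ Λ T ∧ RowInc Λ T ∧ ColInc Λ T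

/-- `F` is the content function of the tableau `T`: `F(T(a,b)) = b - a`. -/
def IsContent (Λ : Set (ℤ × ℤ)) (T : ℤ × ℤ → ℤ) (F : ℤ → ℤ) : Prop :=
  ∀ u ∈ Λ, F (T u) = u.2 - u.1

/-- The diagonal-shift automorphism `ω_m` of `ℤ^m` (depending on `ℓ`):
`ω_m·λ = (λ_m + ℓ + 1, λ_1 + 1, …, λ_{m-1} + 1)` (`0`-indexed; only the
values at indices `< m` are relevant). -/
def omegaMap (m ℓ : ℕ) (v : ℕ → ℤ) : ℕ → ℤ := fun i =>
  if i = 0 then v (m - 1) + (ℓ : ℤ) + 1 else v (i - 1) + 1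


namespace DSE

/-! ### Integer monotonicity helpers -/

lemma antitone_of_step {f : ℤ → ℤ} (h : ∀ a, f (a+1) ≤ f a) :
    ∀ {a b : ℤ}, a ≤ b → f b ≤ f a := by
  have key : ∀ (c : ℕ) (a : ℤ), f (a + c) ≤ f a := by
    intro c
    induction c with
    | zero => intro a; simp
    | succ k ih =>
        intro a
        have h2 : (a + (k+1:ℕ) : ℤ) = (a + k) + 1 := by push_cast; ring
        rw [h2]
        exact le_trans (h _) (ih a)
  intro a b hab
  obtain ⟨c, hc⟩ := Int.le.dest hab
  subst hc
  exact key c a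

lemma strictmono_of_step {f : ℤ → ℤ} {lo hi : ℤ}
    (h : ∀ a, lo ≤ a → a + 1 ≤ hi → f a < f (a+1)) :
    ∀ {a b : ℤ}, lo ≤ a → a < b → b ≤ hi → f a < f b := by
  have key : ∀ (c : ℕ) (a : ℤ), lo ≤ a → a + c + 1 ≤ hi → f a < f (a + c + 1) := by
    intro c
    induction c with
    | zero => intro a h1 h2; simpa using h a h1 (by simpa using h2)
    | succ k ih =>
        intro a h1 h2
        have hk : a + (k:ℤ) + 1 + 1 ≤ hi := by push_cast at h2 ⊢; linarith
        have h3 : f a < f (a + k + 1) := ih a h1 (by linarith)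
        have h4 : f (a + k + 1) < f (a + k + 1 + 1) := h _ (by linarith) hk
        have he : (a + (k+1:ℕ) + 1 : ℤ) = a + k + 1 + 1 := by push_cast; ring
        rw [he]; exact lt_trans h3 h4
  intro a b h1 h2 h3
  obtain ⟨c, hc⟩ := Int.le.dest (by linarith : a + 1 ≤ b)
  have hb : b = a + c + 1 := by linarith
  subst hb
  exact key c a h1 h3

lemma monole_of_strict {f : ℤ → ℤ} {lo hi : ℤ}
    (h : ∀ a b : ℤ, lo ≤ a → a < b → b ≤ hi → f a < f b) :
    ∀ {a b : ℤ}, lo ≤ a → a ≤ b → b ≤ hi → f a ≤ f b := by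
  intro a b h1 h2 h3
  rcases eq_or_lt_of_le h2 with rfl | hlt
  · exact le_refl _
  · exact le_of_lt (h a b h1 hlt h3)

/-- Equal nonempty integer intervals have equal endpoints. -/
lemma interval_eq {x y x' y' : ℤ} (hlt : x < y)
    (h : ∀ b : ℤ, (x < b ∧ b ≤ y) ↔ (x' < b ∧ b ≤ y')) : x = x' ∧ y = y' := by
  have h1 := (h y).1 ⟨hlt, le_refl _⟩
  have h2 := (h y').2 ⟨h1.1.trans_le h1.2, le_refl _⟩
  have hy : y = y' := le_antisymm h1.2 h2.2
  have h3 := (h (x+1)).1 ⟨by linarith, by linarith⟩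
  have h4 := (h (x'+1)).2 ⟨by linarith, by linarith [h1.1, hy]⟩
  exact ⟨by linarith [h3.1, h4.1], hy⟩

/-- Two strictly increasing enumerations of the same finite set of integers agree. -/
lemma enum_unique : ∀ (N : ℕ), ∀ (N' : ℕ) (f g : ℤ → ℤ) (Bf Bg : ℤ),
    (∀ a b : ℤ, Bf ≤ a → a < b → b ≤ Bf + N → f a < f b) →
    (∀ a b : ℤ, Bg ≤ a → a < b → b ≤ Bg + N' → g a < g b) →
    (∀ t : ℤ, (∃ a, Bf ≤ a ∧ a ≤ Bf + N ∧ f a = t) ↔ (∃ a, Bg ≤ a ∧ a ≤ Bg + N' ∧ g a = t)) →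
    N = N' ∧ ∀ j : ℕ, j ≤ N → f (Bf + j) = g (Bg + j) := by
  intro N
  induction N with
  | zero =>
      intro N' f g Bf Bg hf hg him
      -- every element of the g-range equals f Bf
      have hall : ∀ a : ℤ, Bg ≤ a → a ≤ Bg + N' → g a = f Bf := by
        intro a ha1 ha2
        obtain ⟨a', ha'1, ha'2, ha'3⟩ := (him (g a)).2 ⟨a, ha1, ha2, rfl⟩
        have : a' = Bf := by push_cast at ha'2; omega
        subst this; exact ha'3.symm
      have hN' : N' = 0 := by
        by_contra hne
        have hpos : (0:ℤ) < N' := by exact_mod_cast Nat.pos_of_ne_zero hne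
        have h1 : g Bg < g (Bg + N') := hg Bg (Bg + N') (le_refl _) (by linarith) (le_refl _)
        rw [hall Bg (le_refl _) (by linarith), hall (Bg + N') (by linarith) (le_refl _)] at h1
        exact lt_irrefl _ h1
      refine ⟨hN'.symm, ?_⟩
      intro j hj
      have hj0 : j = 0 := Nat.le_zero.mp hj
      subst hj0
      have := hall Bg (le_refl _) (by linarith)
      simpa using this.symm
  | succ k ih =>
      intro N' f g Bf Bg hf hg him
      -- min elements agree
      have hminf : ∀ a : ℤ, Bf ≤ a → a ≤ Bf + (k+1:ℕ) → f Bf ≤ f a := by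
        intro a h1 h2
        exact monole_of_strict hf (le_refl _) h1 h2
      have hming : ∀ a : ℤ, Bg ≤ a → a ≤ Bg + N' → g Bg ≤ g a := by
        intro a h1 h2
        exact monole_of_strict hg (le_refl _) h1 h2
      have hmem_f : ∃ a, Bg ≤ a ∧ a ≤ Bg + N' ∧ g a = f Bf :=
        (him (f Bf)).1 ⟨Bf, le_refl _, by push_cast; linarith [(Nat.cast_nonneg (k+1) : (0:ℤ) ≤ (k+1:ℕ))], rfl⟩
      have hmem_g : ∃ a, Bf ≤ a ∧ a ≤ Bf + (k+1:ℕ) ∧ f a = g Bg :=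
        (him (g Bg)).2 ⟨Bg, le_refl _, by linarith [(Nat.cast_nonneg N' : (0:ℤ) ≤ (N':ℤ))], rfl⟩
      have hmineq : f Bf = g Bg := by
        obtain ⟨a, ha1, ha2, ha3⟩ := hmem_f
        obtain ⟨b, hb1, hb2, hb3⟩ := hmem_g
        have l1 : g Bg ≤ f Bf := ha3 ▸ hming a ha1 ha2
        have l2 : f Bf ≤ g Bg := hb3 ▸ hminf b hb1 hb2
        exact le_antisymm l2 l1
      -- N' ≥ 1
      obtain ⟨k', rfl⟩ : ∃ k', N' = k' + 1 := by
        rcases Nat.eq_zero_or_pos N' with h0 | hpos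
        · exfalso
          subst h0
          have h1 : f Bf < f (Bf + (k+1:ℕ)) :=
            hf Bf _ (le_refl _) (by push_cast; linarith [(Nat.cast_nonneg k : (0:ℤ) ≤ (k:ℕ))]) (le_refl _)
          obtain ⟨a, ha1, ha2, ha3⟩ := (him (f (Bf + (k+1:ℕ)))).1 ⟨_, by push_cast; linarith [(Nat.cast_nonneg k : (0:ℤ) ≤ (k:ℕ))], le_refl _, rfl⟩
          have : a = Bg := by push_cast at ha2; omega
          subst this
          omega
        · exact ⟨N' - 1, by omega⟩
      -- shifted image condition
      have hinjf : ∀ a, Bf ≤ a → a ≤ Bf + (k+1:ℕ) → f a = f Bf → a = Bf := by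
        intro a h1 h2 h3
        by_contra hne
        have : f Bf < f a := hf Bf a (le_refl _) (lt_of_le_of_ne h1 (Ne.symm hne)) h2
        omega
      have hinjg : ∀ a, Bg ≤ a → a ≤ Bg + (k'+1:ℕ) → g a = g Bg → a = Bg := by
        intro a h1 h2 h3
        by_contra hne
        have : g Bg < g a := hg Bg a (le_refl _) (lt_of_le_of_ne h1 (Ne.symm hne)) h2
        omega
      have him' : ∀ t : ℤ, (∃ a, Bf + 1 ≤ a ∧ a ≤ (Bf + 1) + (k:ℕ) ∧ f a = t) ↔
          (∃ a, Bg + 1 ≤ a ∧ a ≤ (Bg + 1) + (k':ℕ) ∧ g a = t) := by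
        intro t
        constructor
        · rintro ⟨a, ha1, ha2, rfl⟩
          have haf : Bf ≤ a := by linarith
          have haf2 : a ≤ Bf + (k+1:ℕ) := by push_cast at ha2 ⊢; linarith
          obtain ⟨b, hb1, hb2, hb3⟩ := (him (f a)).1 ⟨a, haf, haf2, rfl⟩
          have hne : f a ≠ g Bg := by
            rw [← hmineq]
            intro hcon
            have := hinjf a haf haf2 hcon
            omega
          have hbne : b ≠ Bg := by rintro rfl; exact hne hb3.symm
          exact ⟨b, lt_of_le_of_ne hb1 (Ne.symm hbne), by push_cast at hb2 ⊢; linarith, hb3⟩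
        · rintro ⟨a, ha1, ha2, rfl⟩
          have hag : Bg ≤ a := by linarith
          have hag2 : a ≤ Bg + (k'+1:ℕ) := by push_cast at ha2 ⊢; linarith
          obtain ⟨b, hb1, hb2, hb3⟩ := (him (g a)).2 ⟨a, hag, hag2, rfl⟩
          have hne : g a ≠ f Bf := by
            rw [hmineq]
            intro hcon
            have := hinjg a hag hag2 hcon
            omega
          have hbne : b ≠ Bf := by rintro rfl; exact hne hb3.symm
          exact ⟨b, lt_of_le_of_ne hb1 (Ne.symm hbne), by push_cast at hb2 ⊢; linarith, hb3⟩
      have hf' : ∀ a b : ℤ, Bf + 1 ≤ a → a < b → b ≤ (Bf + 1) + (k:ℕ) → f a < f b := by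
        intro a b h1 h2 h3
        exact hf a b (by linarith) h2 (by push_cast at h3 ⊢; linarith)
      have hg' : ∀ a b : ℤ, Bg + 1 ≤ a → a < b → b ≤ (Bg + 1) + (k':ℕ) → g a < g b := by
        intro a b h1 h2 h3
        exact hg a b (by linarith) h2 (by push_cast at h3 ⊢; linarith)
      obtain ⟨hNN, hjj⟩ := ih k' f g (Bf + 1) (Bg + 1) hf' hg' him'
      constructor
      · omega
      · intro j hj
        rcases Nat.eq_zero_or_pos j with rfl | hjpos
        · simpa using hmineq
        · obtain ⟨j', rfl⟩ : ∃ j', j = j' + 1 := ⟨j - 1, by omega⟩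
          have := hjj j' (by omega)
          have e1 : (Bf + 1 + (j':ℕ) : ℤ) = Bf + (j'+1:ℕ) := by push_cast; ring
          have e2 : (Bg + 1 + (j':ℕ) : ℤ) = Bg + (j'+1:ℕ) := by push_cast; ring
          rw [e1, e2] at this
          exact this
/-! ### Abstract periodic-skew-like diagrams -/

structure Diag where
  M : ℤ → ℤ
  L : ℤ → ℤ
  lt : ∀ a, M a < L a
  Mstep : ∀ a, M (a+1) ≤ M a
  Lstep : ∀ a, L (a+1) ≤ L a

namespace Diag

def Dset (E : Diag) : Set (ℤ × ℤ) := {p | E.M p.1 < p.2 ∧ p.2 ≤ E.L p.1}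

variable (E : Diag)

lemma Mmono {a b : ℤ} (h : a ≤ b) : E.M b ≤ E.M a := antitone_of_step E.Mstep h
lemma Lmono {a b : ℤ} (h : a ≤ b) : E.L b ≤ E.L a := antitone_of_step E.Lstep h

/-- `M a - a` decreases quantitatively. -/
lemma Mdiag {a b : ℤ} (h : a ≤ b) : E.M b - b ≤ E.M a - a - (b - a) := by
  have := E.Mmono h; linarith

lemma Ldiag {a b : ℤ} (h : a ≤ b) : E.L b - b ≤ E.L a - a := by
  have := E.Lmono h; linarith

lemma Mdiag' {a b : ℤ} (h : a ≤ b) : E.M b - b ≤ E.M a - a := by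
  have := E.Mmono h; linarith

lemma exists_least_B (d : ℤ) :
    ∃ lb : ℤ, (E.M lb - lb ≤ d - 1) ∧ ∀ z : ℤ, E.M z - z ≤ d - 1 → lb ≤ z := by
  apply Int.exists_least_of_bdd
  · refine ⟨min 0 (E.M 0 - d + 1), ?_⟩
    intro z hz
    by_contra hc
    push_neg at hc
    have hz0 : z ≤ 0 := by
      have := min_le_left 0 (E.M 0 - d + 1); linarith
    have hz1 : z < E.M 0 - d + 1 := by
      have := min_le_right 0 (E.M 0 - d + 1); linarith
    have := E.Mmono hz0  -- M 0 ≤ M z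
    linarith
  · refine ⟨max 0 (E.M 0 - (d - 1)), ?_⟩
    have h0 : (0:ℤ) ≤ max 0 (E.M 0 - (d - 1)) := le_max_left _ _
    have h1 : E.M 0 - (d-1) ≤ max 0 (E.M 0 - (d - 1)) := le_max_right _ _
    have := E.Mmono h0
    linarith

lemma exists_greatest_A (d : ℤ) :
    ∃ ub : ℤ, (d ≤ E.L ub - ub) ∧ ∀ z : ℤ, d ≤ E.L z - z → z ≤ ub := by
  apply Int.exists_greatest_of_bdd
  · refine ⟨max 0 (E.L 0 - d), ?_⟩
    intro z hz
    by_contra hc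
    push_neg at hc
    have hz0 : 0 ≤ z := le_trans (le_max_left _ _) hc.le
    have hz1 : E.L 0 - d < z := lt_of_le_of_lt (le_max_right _ _) hc
    have := E.Lmono hz0
    linarith
  · refine ⟨min 0 (E.L 0 - d), ?_⟩
    have h0 : min 0 (E.L 0 - d) ≤ 0 := min_le_left _ _
    have h1 : min 0 (E.L 0 - d) ≤ E.L 0 - d := min_le_right _ _
    have := E.Lmono h0
    linarith

noncomputable def B (d : ℤ) : ℤ := (E.exists_least_B d).choose
noncomputable def A (d : ℤ) : ℤ := (E.exists_greatest_A d).choose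

lemma B_mem (d : ℤ) : E.M (E.B d) - E.B d ≤ d - 1 := (E.exists_least_B d).choose_spec.1
lemma B_min {d z : ℤ} (h : E.M z - z ≤ d - 1) : E.B d ≤ z :=
  (E.exists_least_B d).choose_spec.2 z h
lemma A_mem (d : ℤ) : d ≤ E.L (E.A d) - E.A d := (E.exists_greatest_A d).choose_spec.1
lemma A_max {d z : ℤ} (h : d ≤ E.L z - z) : z ≤ E.A d :=
  (E.exists_greatest_A d).choose_spec.2 z h

lemma cell_mem {d a : ℤ} (h1 : E.B d ≤ a) (h2 : a ≤ E.A d) : ((a, a + d)) ∈ E.Dset := by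
  constructor
  · have := E.Mdiag' h1
    have := E.B_mem d
    simp only []
    linarith
  · have := E.Ldiag h2
    have := E.A_mem d
    simp only []
    linarith

lemma mem_bounds {a b : ℤ} (h : ((a, b)) ∈ E.Dset) : E.B (b - a) ≤ a ∧ a ≤ E.A (b - a) := by
  obtain ⟨h1, h2⟩ := h
  exact ⟨E.B_min (by simp at h1 ⊢; linarith), E.A_max (by simp at h2 ⊢; linarith)⟩

lemma B_anti {d e : ℤ} (h : d ≤ e) : E.B e ≤ E.B d :=
  E.B_min (le_trans (E.B_mem d) (by linarith))

lemma A_anti {d e : ℤ} (h : d ≤ e) : E.A e ≤ E.A d :=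
  E.A_max (le_trans (by linarith) (E.A_mem e))

lemma B_succ_ge (d : ℤ) : E.B d - 1 ≤ E.B (d+1) := by
  by_contra hc
  push_neg at hc
  have h1 : E.B (d+1) ≤ E.B d - 2 := by linarith
  have h2 := E.Mdiag (by linarith : E.B (d+1) ≤ E.B d - 1)
  have h3 := E.B_mem (d+1)
  have h4 : E.M (E.B d - 1) - (E.B d - 1) ≤ d - 1 := by linarith
  have := E.B_min h4
  linarith

lemma A_succ_ge (d : ℤ) : E.A d - 1 ≤ E.A (d+1) := by
  apply E.A_max
  have h1 := E.A_mem d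
  have h2 := E.Lmono (by linarith : E.A d - 1 ≤ E.A d)
  linarith

/-- The gap lemma: if diagonals `d` and `e` are nonempty but everything strictly
between is empty (and `e ≥ d+2`), then `B d = A e + 1`. -/
lemma gap {d e : ℤ} (hd : E.B d ≤ E.A d) (he : E.B e ≤ E.A e) (hde : d + 2 ≤ e)
    (hmid : ∀ x : ℤ, d < x → x < e → ¬(E.B x ≤ E.A x)) : E.B d = E.A e + 1 := by
  set a' := E.A e with ha'
  -- row a'+1 top content
  set d₁ := E.L (a'+1) - (a'+1) with hd₁
  have hcell₁ : ((a'+1, E.L (a'+1))) ∈ E.Dset := ⟨E.lt _, le_refl _⟩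
  have hb₁ := E.mem_bounds hcell₁
  -- note L (a'+1) - (a'+1) = d₁
  have hd₁lt : d₁ < e := by
    by_contra hc
    push_neg at hc
    have := E.A_max (d := e) (z := a'+1) (by linarith)
    omega
  have hd₁ge : d ≤ d₁ := by
    by_contra hc
    push_neg at hc
    -- consider a'' = A d
    set a'' := E.A d with ha''
    have hLa'' : d ≤ E.L a'' - a'' := E.A_mem d
    have haa : a'' ≤ a' := by
      by_contra hcc
      push_neg at hcc
      have : a' + 1 ≤ a'' := by linarith
      have := E.Ldiag this
      omega
    have hLe : e ≤ E.L a'' - a'' := by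
      have := E.Ldiag haa
      have := E.A_mem e
      linarith
    -- cell (a'', a''+d+1) ∈ Dset
    have hM : E.M a'' - a'' ≤ d - 1 := by
      have hBd : E.B d ≤ a'' := le_trans hd (le_refl _)
      have := E.Mdiag' hBd
      have := E.B_mem d
      linarith
    have hcell : ((a'', a'' + (d+1))) ∈ E.Dset := by
      constructor
      · simp only []; linarith
      · simp only []; linarith
    have hb := E.mem_bounds hcell
    have : E.B (a'' + (d+1) - a'') ≤ E.A (a'' + (d+1) - a'') := le_trans hb.1 hb.2
    simp only [add_sub_cancel_left] at this
    exact hmid (d+1) (by linarith) (by linarith) this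
  -- d₁ nonempty and between d and e (inclusive of d): must be d
  have hd₁eq : d₁ = d := by
    by_contra hc
    have h1 : d < d₁ := lt_of_le_of_ne hd₁ge (fun h => hc h.symm)
    have hne : E.B d₁ ≤ E.A d₁ := by
      have := hb₁
      rw [show E.L (a'+1) - (a'+1) = d₁ from rfl] at this
      exact le_trans this.1 this.2
    exact hmid d₁ h1 hd₁lt hne
  -- B d ≤ a' + 1
  have hBle : E.B d ≤ a' + 1 := by
    have := hb₁.1
    rw [show E.L (a'+1) - (a'+1) = d₁ from rfl, hd₁eq] at this
    exact this
  -- B d ≥ a' + 1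
  have hBge : a' + 1 ≤ E.B d := by
    by_contra hc
    push_neg at hc
    have hBa' : E.B d ≤ a' := by linarith
    have hLB : e ≤ E.L (E.B d) - E.B d := by
      have := E.Ldiag hBa'
      have := E.A_mem e
      linarith
    have hMB := E.B_mem d
    have hcell : ((E.B d, E.B d + (d+1))) ∈ E.Dset := by
      constructor
      · simp only []; linarith
      · simp only []; linarith
    have hb := E.mem_bounds hcell
    simp only [add_sub_cancel_left] at hb
    exact hmid (d+1) (by linarith) (by linarith) (le_trans hb.1 hb.2)
  omega

end Diag
namespace Diag

lemma mem_bounds' (E : Diag) {p : ℤ × ℤ} (h : p ∈ E.Dset) :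
    E.B (p.2 - p.1) ≤ p.1 ∧ p.1 ≤ E.A (p.2 - p.1) := by
  obtain ⟨h1, h2⟩ := h
  exact ⟨E.B_min (by linarith), E.A_max (by linarith)⟩

end Diag

/-! ### Tableau infrastructure -/

noncomputable def cellOf (Λ : Set (ℤ × ℤ)) (T : ℤ × ℤ → ℤ)
    (h : Set.SurjOn T Λ Set.univ) (t : ℤ) : ℤ × ℤ :=
  (h (Set.mem_univ t)).choose

lemma cellOf_mem {Λ : Set (ℤ × ℤ)} {T : ℤ × ℤ → ℤ}
    (h : Set.SurjOn T Λ Set.univ) (t : ℤ) : cellOf Λ T h t ∈ Λ :=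
  (h (Set.mem_univ t)).choose_spec.1

lemma cellOf_T {Λ : Set (ℤ × ℤ)} {T : ℤ × ℤ → ℤ}
    (h : Set.SurjOn T Λ Set.univ) (t : ℤ) : T (cellOf Λ T h t) = t :=
  (h (Set.mem_univ t)).choose_spec.2

section Tab

variable {E : Diag} {T : ℤ × ℤ → ℤ} {Ci : ℤ → ℤ}

/-- Content of the cell of `t`. -/
lemma C_cell (hbij : Set.BijOn T E.Dset Set.univ) (hC : IsContent E.Dset T Ci) (t : ℤ) :
    Ci t = (cellOf E.Dset T hbij.2.2 t).2 - (cellOf E.Dset T hbij.2.2 t).1 := by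
  conv_lhs => rw [← cellOf_T hbij.2.2 t]
  exact hC _ (cellOf_mem hbij.2.2 t)

lemma cell_snd (hbij : Set.BijOn T E.Dset Set.univ) (hC : IsContent E.Dset T Ci) (t : ℤ) :
    (cellOf E.Dset T hbij.2.2 t).2 = (cellOf E.Dset T hbij.2.2 t).1 + Ci t := by
  have := C_cell hbij hC t; linarith

lemma cell_bounds (hbij : Set.BijOn T E.Dset Set.univ) (hC : IsContent E.Dset T Ci) (t : ℤ) :
    E.B (Ci t) ≤ (cellOf E.Dset T hbij.2.2 t).1 ∧
      (cellOf E.Dset T hbij.2.2 t).1 ≤ E.A (Ci t) := by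
  have h := E.mem_bounds' (cellOf_mem hbij.2.2 t)
  rwa [← C_cell hbij hC t] at h

lemma cell_pair (hbij : Set.BijOn T E.Dset Set.univ) (hC : IsContent E.Dset T Ci) (t : ℤ) :
    cellOf E.Dset T hbij.2.2 t =
      ((cellOf E.Dset T hbij.2.2 t).1, (cellOf E.Dset T hbij.2.2 t).1 + Ci t) :=
  Prod.ext rfl (cell_snd hbij hC t)

/-- Values strictly increase along a diagonal. -/
lemma diag_step (hrow : RowInc E.Dset T) (hcol : ColInc E.Dset T)
    {d a : ℤ} (h1 : E.B d ≤ a) (h2 : a + 1 ≤ E.A d) :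
    T (a, a + d) < T (a + 1, (a + 1) + d) := by
  have c1 : ((a, a + d)) ∈ E.Dset := E.cell_mem h1 (by linarith)
  have m1 : E.M a < a + d := c1.1
  have m2 : a + d ≤ E.L a := c1.2
  have hL : d ≤ E.L (a+1) - (a+1) := le_trans (E.A_mem d) (E.Ldiag h2)
  have c2 : ((a, (a + d) + 1)) ∈ E.Dset :=
    ⟨show E.M a < (a + d) + 1 by linarith, show (a + d) + 1 ≤ E.L a by
      have := E.Lstep a; linarith⟩
  have c3 : ((a + 1, (a + d) + 1)) ∈ E.Dset := by
    have := E.cell_mem (d := d) (a := a+1) (le_trans h1 (by linarith)) h2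
    have he : ((a+1 : ℤ), (a+1) + d) = ((a+1 : ℤ), (a + d) + 1) := by
      rw [Prod.mk.injEq]; exact ⟨rfl, by ring⟩
    rwa [he] at this
  have s1 := hrow a (a + d) c1 c2
  have s2 := hcol a ((a + d) + 1) c2 c3
  have he2 : ((a + 1 : ℤ), (a + 1) + d) = ((a + 1 : ℤ), (a + d) + 1) := by
    rw [Prod.mk.injEq]; exact ⟨rfl, by ring⟩
  rw [he2]
  exact lt_trans s1 s2

lemma diag_strict (hrow : RowInc E.Dset T) (hcol : ColInc E.Dset T)
    {d : ℤ} : ∀ a b : ℤ, E.B d ≤ a → a < b → b ≤ E.A d →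
    T (a, a + d) < T (b, b + d) := by
  intro a b ha hab hb
  exact strictmono_of_step (f := fun x => T (x, x + d)) (lo := E.B d) (hi := E.A d)
    (fun x hx1 hx2 => diag_step hrow hcol hx1 hx2) ha hab hb

lemma val_C (hC : IsContent E.Dset T Ci) {d a : ℤ}
    (h1 : E.B d ≤ a) (h2 : a ≤ E.A d) : Ci (T (a, a + d)) = d := by
  have h : Ci (T (a, a + d)) = (a + d) - a := hC _ (E.cell_mem h1 h2)
  rw [h]; ring

/-- The image of the diagonal-`d` interval under the tableau is `Ci⁻¹ d`. -/
lemma diag_image (hbij : Set.BijOn T E.Dset Set.univ) (hC : IsContent E.Dset T Ci)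
    {d : ℤ} (hne : E.B d ≤ E.A d) (t' : ℤ) :
    (∃ a, E.B d ≤ a ∧ a ≤ E.B d + ((E.A d - E.B d).toNat : ℤ) ∧ T (a, a + d) = t') ↔
      Ci t' = d := by
  constructor
  · rintro ⟨a, h1, h2, rfl⟩
    rw [Int.toNat_of_nonneg (by linarith)] at h2
    exact val_C hC h1 (by linarith)
  · intro h
    refine ⟨(cellOf E.Dset T hbij.2.2 t').1, ?_, ?_, ?_⟩
    · have := (cell_bounds hbij hC t').1; rwa [h] at this
    · have h1 := (cell_bounds hbij hC t').1
      have h2 := (cell_bounds hbij hC t').2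
      rw [h] at h1 h2
      rw [Int.toNat_of_nonneg (by linarith)]
      linarith
    · have hp := cell_pair hbij hC t'
      rw [h] at hp
      rw [← hp]
      exact cellOf_T hbij.2.2 t'

end Tab
section Compare

variable {E E' : Diag} {T S : ℤ × ℤ → ℤ} {Ci : ℤ → ℤ}

/-- Transfer of positions along a diagonal between two tableaux with the
same content function. -/
lemma key_shift
    (hbij : Set.BijOn T E.Dset Set.univ) (hrow : RowInc E.Dset T)
    (hcol : ColInc E.Dset T) (hC : IsContent E.Dset T Ci)
    (hbij' : Set.BijOn S E'.Dset Set.univ) (hrow' : RowInc E'.Dset S)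
    (hcol' : ColInc E'.Dset S) (hC' : IsContent E'.Dset S Ci) (t : ℤ) :
    (cellOf E'.Dset S hbij'.2.2 t).1 =
      (cellOf E.Dset T hbij.2.2 t).1 + (E'.B (Ci t) - E.B (Ci t)) ∧
    E.A (Ci t) - E.B (Ci t) = E'.A (Ci t) - E'.B (Ci t) := by
  set d := Ci t with hd
  have hne : E.B d ≤ E.A d := le_trans (cell_bounds hbij hC t).1 (cell_bounds hbij hC t).2
  have hne' : E'.B d ≤ E'.A d := le_trans (cell_bounds hbij' hC' t).1 (cell_bounds hbij' hC' t).2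
  set N : ℕ := (E.A d - E.B d).toNat with hN
  set N' : ℕ := (E'.A d - E'.B d).toNat with hN'
  have hAN : E.A d = E.B d + N := by rw [hN]; omega
  have hAN' : E'.A d = E'.B d + N' := by rw [hN']; omega
  have hf : ∀ a b : ℤ, E.B d ≤ a → a < b → b ≤ E.B d + (N:ℤ) →
      T (a, a + d) < T (b, b + d) := by
    intro a b ha hab hb
    exact diag_strict hrow hcol a b ha hab (by omega)
  have hg : ∀ a b : ℤ, E'.B d ≤ a → a < b → b ≤ E'.B d + (N':ℤ) →
      S (a, a + d) < S (b, b + d) := by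
    intro a b ha hab hb
    exact diag_strict hrow' hcol' a b ha hab (by omega)
  have him : ∀ t' : ℤ,
      (∃ a, E.B d ≤ a ∧ a ≤ E.B d + (N:ℤ) ∧ T (a, a + d) = t') ↔
      (∃ a, E'.B d ≤ a ∧ a ≤ E'.B d + (N':ℤ) ∧ S (a, a + d) = t') := by
    intro t'
    rw [diag_image hbij hC hne t', diag_image hbij' hC' hne' t']
  obtain ⟨hNN, hjj⟩ := enum_unique N N' (fun a => T (a, a + d)) (fun a => S (a, a + d))
      (E.B d) (E'.B d) hf hg him
  refine ⟨?_, by omega⟩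
  set a := (cellOf E.Dset T hbij.2.2 t).1 with ha
  have hb1 := (cell_bounds hbij hC t).1
  have hb2 := (cell_bounds hbij hC t).2
  rw [← hd] at hb1 hb2
  rw [← ha] at hb1 hb2
  set j : ℕ := (a - E.B d).toNat with hj
  have hja : E.B d + (j:ℤ) = a := by rw [hj]; omega
  have hjN : j ≤ N := by omega
  have hval : T (a, a + d) = t := by
    have hp := cell_pair hbij hC t
    rw [← hd] at hp
    rw [← ha] at hp
    rw [show ((a, a + d)) = cellOf E.Dset T hbij.2.2 t from by rw [hp]]
    exact cellOf_T hbij.2.2 t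
  have hgval : S (E'.B d + (j:ℤ), (E'.B d + (j:ℤ)) + d) = t := by
    have := hjj j hjN
    beta_reduce at this
    rw [hja] at this
    rw [← this, hval]
  -- the cell of t in E' is (E'.B d + j, ... + d)
  have hmem : ((E'.B d + (j:ℤ), (E'.B d + (j:ℤ)) + d)) ∈ E'.Dset :=
    E'.cell_mem (by omega) (by omega)
  have hcell' : cellOf E'.Dset S hbij'.2.2 t = (E'.B d + (j:ℤ), (E'.B d + (j:ℤ)) + d) := by
    apply hbij'.2.1 (cellOf_mem hbij'.2.2 t) hmem
    rw [cellOf_T hbij'.2.2 t, hgval]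
  rw [hcell']
  simp only []
  omega

/-- the drop of `B` from `d` to `d+1` is detected by the content function. -/
lemma Bdrop_iff
    (hbij : Set.BijOn T E.Dset Set.univ) (hrow : RowInc E.Dset T)
    (hcol : ColInc E.Dset T) (hC : IsContent E.Dset T Ci) {d : ℤ}
    (hd : E.B d ≤ E.A d) (hd1 : E.B (d+1) ≤ E.A (d+1)) :
    (E.B (d+1) < E.B d) ↔ ∃ t, Ci t = d + 1 ∧ ∀ s, Ci s = d → t < s := by
  constructor
  · intro hlt
    have heq : E.B (d+1) = E.B d - 1 := by
      have := E.B_succ_ge d; omega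
    refine ⟨T (E.B d - 1, (E.B d - 1) + (d+1)), ?_, ?_⟩
    · exact val_C hC (by omega) (by omega)
    · intro s hs
      -- s = T ((cell s).1, (cell s).1 + d) with (cell s).1 ∈ [B d, A d]
      have hb1 := (cell_bounds hbij hC s).1
      have hb2 := (cell_bounds hbij hC s).2
      rw [hs] at hb1 hb2
      set a := (cellOf E.Dset T hbij.2.2 s).1 with ha
      have hvs : T (a, a + d) = s := by
        have hp := cell_pair hbij hC s
        rw [hs, ← ha] at hp
        rw [show ((a, a + d)) = cellOf E.Dset T hbij.2.2 s from by rw [hp]]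
        exact cellOf_T hbij.2.2 s
      -- step 1 : column increase from (B d - 1, B d + d) to (B d, B d + d)
      have c1 : ((E.B d - 1, E.B d + d)) ∈ E.Dset := by
        have := E.cell_mem (d := d+1) (a := E.B d - 1) (by omega) (by omega)
        have he : ((E.B d - 1, (E.B d - 1) + (d+1))) = ((E.B d - 1, E.B d + d)) := by
          rw [Prod.mk.injEq]; exact ⟨rfl, by ring⟩
        rwa [he] at this
      have c2 : ((E.B d, E.B d + d)) ∈ E.Dset := E.cell_mem (le_refl _) hd
      have s1 := hcol (E.B d - 1) (E.B d + d) c1 (by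
        have he : ((E.B d - 1 + 1, E.B d + d)) = ((E.B d, E.B d + d)) := by
          rw [Prod.mk.injEq]; exact ⟨by ring, rfl⟩
        rw [he]; exact c2)
      have s2 : T (E.B d, E.B d + d) ≤ T (a, a + d) :=
        monole_of_strict (f := fun x => T (x, x + d))
          (fun x y hx hxy hy => diag_strict hrow hcol x y hx hxy hy)
          (le_refl _) hb1 hb2
      have he1 : ((E.B d - 1, (E.B d - 1) + (d+1))) = ((E.B d - 1, E.B d + d)) := by
        rw [Prod.mk.injEq]; exact ⟨rfl, by ring⟩
      have he2 : ((E.B d - 1 + 1, E.B d + d)) = ((E.B d, E.B d + d)) := by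
        rw [Prod.mk.injEq]; exact ⟨by ring, rfl⟩
      rw [he1, ← hvs]
      rw [he2] at s1
      exact lt_of_lt_of_le s1 s2
  · rintro ⟨t, ht, hall⟩
    by_contra hc
    push_neg at hc
    have heq : E.B (d+1) = E.B d := le_antisymm (E.B_anti (by linarith)) hc
    have hb1 := (cell_bounds hbij hC t).1
    have hb2 := (cell_bounds hbij hC t).2
    rw [ht] at hb1 hb2
    set a := (cellOf E.Dset T hbij.2.2 t).1 with ha
    have hvt : T (a, a + (d+1)) = t := by
      have hp := cell_pair hbij hC t
      rw [ht, ← ha] at hp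
      rw [show ((a, a + (d+1))) = cellOf E.Dset T hbij.2.2 t from by rw [hp]]
      exact cellOf_T hbij.2.2 t
    have hmem : ((a, a + d)) ∈ E.Dset := E.cell_mem (by omega) (le_trans hb2 (E.A_anti (by linarith)))
    have hs : Ci (T (a, a + d)) = d := val_C hC (by omega) (le_trans hb2 (E.A_anti (by linarith)))
    have h1 : t < T (a, a + d) := hall _ hs
    have h2 : T (a, a + d) < T (a, (a + d) + 1) := by
      apply hrow a (a + d) hmem
      have : ((a, (a + d) + 1)) = ((a, a + (d+1))) := by
        rw [Prod.mk.injEq]; exact ⟨rfl, by ring⟩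
      rw [this]
      rw [show ((a, a + (d+1))) = cellOf E.Dset T hbij.2.2 t from by
        rw [cell_pair hbij hC t, ht, ← ha]]
      exact cellOf_mem hbij.2.2 t
    have h3 : ((a, (a+d)+1)) = ((a, a + (d+1))) := by
      rw [Prod.mk.injEq]; exact ⟨rfl, by ring⟩
    rw [h3, hvt] at h2
    omega

end Compare
section Core

variable {E E' : Diag} {T S : ℤ × ℤ → ℤ} {Ci : ℤ → ℤ}

lemma supp_to_nonempty (hC : IsContent E.Dset T Ci)
    (hbij : Set.BijOn T E.Dset Set.univ) {d : ℤ} (h : ∃ t, Ci t = d) :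
    E.B d ≤ E.A d := by
  obtain ⟨t, rfl⟩ := h
  exact le_trans (cell_bounds hbij hC t).1 (cell_bounds hbij hC t).2

lemma nonempty_to_supp (hC : IsContent E.Dset T Ci) {d : ℤ}
    (h : E.B d ≤ E.A d) : ∃ t, Ci t = d :=
  ⟨T (E.B d, E.B d + d), val_C hC (le_refl _) h⟩

lemma cdiff_const_aux
    (hbij : Set.BijOn T E.Dset Set.univ) (hrow : RowInc E.Dset T)
    (hcol : ColInc E.Dset T) (hC : IsContent E.Dset T Ci)
    (hbij' : Set.BijOn S E'.Dset Set.univ) (hrow' : RowInc E'.Dset S)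
    (hcol' : ColInc E'.Dset S) (hC' : IsContent E'.Dset S Ci) :
    ∀ n : ℕ, ∀ d e : ℤ, (∃ t, Ci t = d) → (∃ t, Ci t = e) → d ≤ e →
      (e - d).toNat ≤ n → E'.B d - E.B d = E'.B e - E.B e := by
  intro n
  induction n with
  | zero =>
      intro d e _ _ hde hn
      have : d = e := by omega
      rw [this]
  | succ k ih =>
      intro d e hd he hde hn
      rcases eq_or_lt_of_le hde with rfl | hlt
      · rfl
      · -- least element of supp in (d, e]
        obtain ⟨d', ⟨hd'supp, hd'lo, hd'hi⟩, hd'min⟩ :=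
          Int.exists_least_of_bdd (P := fun x => (∃ t, Ci t = x) ∧ d < x ∧ x ≤ e)
            ⟨d + 1, fun z hz => by omega⟩ ⟨e, he, hlt, le_refl _⟩
        have hstep : E'.B d - E.B d = E'.B d' - E.B d' := by
          rcases eq_or_lt_of_le (by omega : d + 1 ≤ d') with heq | hgap
          · -- adjacent diagonals: interleaving argument
            rw [← heq] at hd'supp
            have h1 := Bdrop_iff hbij hrow hcol hC
              (supp_to_nonempty hC hbij hd) (supp_to_nonempty hC hbij hd'supp)
            have h2 := Bdrop_iff hbij' hrow' hcol' hC'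
              (supp_to_nonempty hC' hbij' hd) (supp_to_nonempty hC' hbij' hd'supp)
            have h3 := E.B_succ_ge d
            have h4 := E.B_anti (by linarith : d ≤ d + 1)
            have h5 := E'.B_succ_ge d
            have h6 := E'.B_anti (by linarith : d ≤ d + 1)
            rw [← heq]
            rcases Classical.em (∃ t, Ci t = d + 1 ∧ ∀ s, Ci s = d → t < s) with hP | hP
            · have := h1.2 hP
              have := h2.2 hP
              omega
            · have e1 : ¬ (E.B (d+1) < E.B d) := fun hcon => hP (h1.1 hcon)
              have e2 : ¬ (E'.B (d+1) < E'.B d) := fun hcon => hP (h2.1 hcon)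
              omega
          · -- gap: use the gap lemma in both diagrams
            have hmid : ∀ x : ℤ, d < x → x < d' → ¬(E.B x ≤ E.A x) := by
              intro x hx1 hx2 hcon
              have hsx : ∃ t, Ci t = x := nonempty_to_supp hC hcon
              have := hd'min x ⟨hsx, hx1, by omega⟩
              omega
            have hmid' : ∀ x : ℤ, d < x → x < d' → ¬(E'.B x ≤ E'.A x) := by
              intro x hx1 hx2 hcon
              have hsx : ∃ t, Ci t = x := nonempty_to_supp hC' hcon
              have := hd'min x ⟨hsx, hx1, by omega⟩
              omega
            have g1 := E.gap (supp_to_nonempty hC hbij hd)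
              (supp_to_nonempty hC hbij hd'supp) (by omega) hmid
            have g2 := E'.gap (supp_to_nonempty hC' hbij' hd)
              (supp_to_nonempty hC' hbij' hd'supp) (by omega) hmid'
            -- sizes of diagonal d' agree
            obtain ⟨t', ht'⟩ := hd'supp
            have hsize := (key_shift hbij hrow hcol hC hbij' hrow' hcol' hC' t').2
            rw [ht'] at hsize
            omega
        rw [hstep]
        exact ih d' e hd'supp he hd'hi (by omega)

/-- Core comparison: two diagrams carrying standard tableaux with the same
content function differ by a diagonal shift. -/
lemma core_shift
    (hbij : Set.BijOn T E.Dset Set.univ) (hrow : RowInc E.Dset T)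
    (hcol : ColInc E.Dset T) (hC : IsContent E.Dset T Ci)
    (hbij' : Set.BijOn S E'.Dset Set.univ) (hrow' : RowInc E'.Dset S)
    (hcol' : ColInc E'.Dset S) (hC' : IsContent E'.Dset S Ci) :
    ∃ r : ℤ, E'.Dset = (fun u : ℤ × ℤ => u + (r, r)) '' E.Dset := by
  set r := E'.B (Ci 0) - E.B (Ci 0) with hr
  have hconst : ∀ t : ℤ, E'.B (Ci t) - E.B (Ci t) = r := by
    intro t
    rcases le_total (Ci t) (Ci 0) with h | h
    · exact cdiff_const_aux hbij hrow hcol hC hbij' hrow' hcol' hC'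
        (Ci 0 - Ci t).toNat (Ci t) (Ci 0) ⟨t, rfl⟩ ⟨0, rfl⟩ h (le_refl _)
    · exact (cdiff_const_aux hbij hrow hcol hC hbij' hrow' hcol' hC'
        (Ci t - Ci 0).toNat (Ci 0) (Ci t) ⟨0, rfl⟩ ⟨t, rfl⟩ h (le_refl _)).symm
  have hcell : ∀ t : ℤ, cellOf E'.Dset S hbij'.2.2 t = cellOf E.Dset T hbij.2.2 t + (r, r) := by
    intro t
    have h1 := (key_shift hbij hrow hcol hC hbij' hrow' hcol' hC' t).1
    rw [hconst t] at h1
    have h2 := cell_snd hbij hC t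
    have h3 := cell_snd hbij' hC' t
    have : cellOf E.Dset T hbij.2.2 t + (r, r) =
        ((cellOf E.Dset T hbij.2.2 t).1 + r, (cellOf E.Dset T hbij.2.2 t).2 + r) := rfl
    rw [this]
    apply Prod.ext
    · exact h1
    · simp only []
      omega
  refine ⟨r, ?_⟩
  ext w
  constructor
  · intro hw
    have hcw : cellOf E'.Dset S hbij'.2.2 (S w) = w := by
      apply hbij'.2.1 (cellOf_mem hbij'.2.2 (S w)) hw
      exact cellOf_T hbij'.2.2 (S w)
    refine ⟨cellOf E.Dset T hbij.2.2 (S w), cellOf_mem hbij.2.2 (S w), ?_⟩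
    simp only []
    rw [← hcell (S w), hcw]
  · rintro ⟨u, hu, rfl⟩
    have hcu : cellOf E.Dset T hbij.2.2 (T u) = u := by
      apply hbij.2.1 (cellOf_mem hbij.2.2 (T u)) hu
      exact cellOf_T hbij.2.2 (T u)
    have h5 := hcell (T u)
    rw [hcu] at h5
    show u + (r, r) ∈ E'.Dset
    rw [← h5]
    exact cellOf_mem hbij'.2.2 (T u)

end Core
/-! ### The concrete diagrams `hatD` -/

def rowIdx (m : ℕ) (a : ℤ) : ℕ := ((a-1) % (m:ℤ)).toNat
def rowK (m : ℕ) (a : ℤ) : ℤ := (a-1) / (m:ℤ)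

def Lf (m ℓ : ℕ) (v : ℕ → ℤ) (a : ℤ) : ℤ := v (rowIdx m a) - rowK m a * ℓ

lemma omegaMap_zero {m ℓ : ℕ} (v : ℕ → ℤ) : omegaMap m ℓ v 0 = v (m-1) + ℓ + 1 :=
  if_pos rfl

lemma omegaMap_succ {m ℓ : ℕ} (v : ℕ → ℤ) (j : ℕ) : omegaMap m ℓ v (j+1) = v j + 1 := by
  unfold omegaMap
  rw [if_neg (Nat.succ_ne_zero j)]
  norm_num

section rowlemmas
variable {m ℓ : ℕ}

lemma rowIdx_lt (hm : 1 ≤ m) (a : ℤ) : rowIdx m a < m := by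
  have hm0 : ((m:ℤ)) ≠ 0 := by exact_mod_cast Nat.one_le_iff_ne_zero.mp hm
  have h1 : (a-1) % (m:ℤ) < m := Int.emod_lt_of_pos _ (by exact_mod_cast hm)
  have h2 : 0 ≤ (a-1) % (m:ℤ) := Int.emod_nonneg _ hm0
  unfold rowIdx
  omega

lemma row_decomp (hm : 1 ≤ m) (a : ℤ) : a = ((rowIdx m a : ℤ)) + 1 + rowK m a * m := by
  have hm0 : ((m:ℤ)) ≠ 0 := by exact_mod_cast Nat.one_le_iff_ne_zero.mp hm
  have h1 := Int.mul_ediv_add_emod (a-1) (m:ℤ)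
  have h2 : 0 ≤ (a-1) % (m:ℤ) := Int.emod_nonneg _ hm0
  unfold rowIdx rowK
  push_cast
  rw [Int.toNat_of_nonneg h2]
  linarith

lemma decomp_unique {a : ℤ} {i : ℕ} {k : ℤ} (hi : i < m)
    (h : a = (i:ℤ) + 1 + k * m) : rowIdx m a = i ∧ rowK m a = k := by
  have hmpos : (0:ℤ) < m := by exact_mod_cast Nat.zero_lt_of_lt hi
  have hm0 : ((m:ℤ)) ≠ 0 := ne_of_gt hmpos
  have ha : a - 1 = (i:ℤ) + (m:ℤ) * k := by rw [h]; ring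
  have hemod : (a-1) % (m:ℤ) = i := by
    rw [ha, Int.add_mul_emod_self_left,
      Int.emod_eq_of_lt (by positivity) (by exact_mod_cast hi)]
  have hediv : (a-1) / (m:ℤ) = k := by
    rw [ha, Int.add_mul_ediv_left _ _ hm0,
      Int.ediv_eq_zero_of_lt (by positivity) (by exact_mod_cast hi)]
    ring
  constructor
  · unfold rowIdx; rw [hemod]; exact Int.toNat_natCast i
  · exact hediv

lemma Lf_at (v : ℕ → ℤ) {a : ℤ} {i : ℕ} {k : ℤ} (hi : i < m)
    (h : a = (i:ℤ) + 1 + k * m) : Lf m ℓ v a = v i - k * ℓ := by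
  obtain ⟨h1, h2⟩ := decomp_unique hi h
  unfold Lf
  rw [h1, h2]

lemma Lf_step (hm : 1 ≤ m) {v : ℕ → ℤ} (hdom : isDom m ℓ v) (a : ℤ) :
    Lf m ℓ v (a+1) ≤ Lf m ℓ v a := by
  set i := rowIdx m a with hi
  set k := rowK m a with hk
  have hd : a = (i:ℤ) + 1 + k * m := row_decomp hm a
  have hil : i < m := rowIdx_lt hm a
  have hLa : Lf m ℓ v a = v i - k * ℓ := Lf_at v hil hd
  by_cases hcase : i + 1 < m
  · have hd1 : a + 1 = ((i+1:ℕ):ℤ) + 1 + k * m := by push_cast; linarith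
    rw [Lf_at v hcase hd1, hLa]
    have := hdom.1 i (i+1) (by omega) hcase
    linarith
  · have him : i = m - 1 := by omega
    have hd1 : a + 1 = ((0:ℕ):ℤ) + 1 + (k+1) * m := by
      have hc : ((i:ℕ):ℤ) = (m:ℤ) - 1 := by omega
      push_cast
      linarith
    rw [Lf_at v hm hd1, hLa]
    have h2 := hdom.2
    rw [← him] at h2
    push_cast
    linarith

lemma Lf_per (hm : 1 ≤ m) {v : ℕ → ℤ} (a : ℤ) : Lf m ℓ v (a + m) = Lf m ℓ v a - ℓ := by
  set i := rowIdx m a with hi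
  set k := rowK m a with hk
  have hd : a = (i:ℤ) + 1 + k * m := row_decomp hm a
  have hil : i < m := rowIdx_lt hm a
  have hd1 : a + m = (i:ℤ) + 1 + (k+1) * m := by push_cast; linarith
  rw [Lf_at v hil hd1, Lf_at v hil hd]
  ring

lemma Lf_lt (hm : 1 ≤ m) {v w : ℕ → ℤ} (hlt : ∀ i < m, w i < v i) (a : ℤ) :
    Lf m ℓ w a < Lf m ℓ v a := by
  unfold Lf
  have := hlt _ (rowIdx_lt hm a)
  linarith

lemma hatD_mem_iff (hm : 1 ≤ m) {v w : ℕ → ℤ} (p : ℤ × ℤ) :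
    p ∈ hatD m ℓ v w ↔ (Lf m ℓ w p.1 < p.2 ∧ p.2 ≤ Lf m ℓ v p.1) := by
  constructor
  · rintro ⟨k, i, hi, hp1, hlo, hhi⟩
    rw [Lf_at w hi hp1, Lf_at v hi hp1]
    constructor <;> linarith
  · rintro ⟨h1, h2⟩
    refine ⟨rowK m p.1, rowIdx m p.1, rowIdx_lt hm p.1, row_decomp hm p.1, ?_, ?_⟩
    · unfold Lf at h1; linarith
    · unfold Lf at h2; linarith

end rowlemmas

/-- The diagram of a pair in `𝒥*` as an abstract `Diag`. -/
def toDiag (n m ℓ : ℕ) (lam mu : ℕ → ℤ) (h : memJstar n m ℓ lam mu) : Diag where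
  M := Lf m ℓ mu
  L := Lf m ℓ lam
  lt := Lf_lt h.1 h.2.2.2.1
  Mstep := Lf_step h.1 h.2.2.1
  Lstep := Lf_step h.1 h.2.1

lemma toDiag_set {n m ℓ : ℕ} {lam mu : ℕ → ℤ} (h : memJstar n m ℓ lam mu) :
    (toDiag n m ℓ lam mu h).Dset = hatD m ℓ lam mu := by
  ext p
  rw [hatD_mem_iff h.1]
  exact Iff.rfl

lemma hatD_shift_mem {m ℓ : ℕ} {v w : ℕ → ℤ} {p : ℤ × ℤ} (h : p ∈ hatD m ℓ v w) :
    p + ((m:ℤ), -(ℓ:ℤ)) ∈ hatD m ℓ v w := by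
  obtain ⟨k, i, hi, hp1, hlo, hhi⟩ := h
  refine ⟨k+1, i, hi, ?_, ?_, ?_⟩
  · show p.1 + m = (i:ℤ) + 1 + (k+1) * m
    rw [hp1]; ring
  · show (w i : ℤ) + 1 ≤ p.2 + -(ℓ:ℤ) + (k+1) * ℓ
    have he : p.2 + -(ℓ:ℤ) + (k+1) * ℓ = p.2 + k * ℓ := by ring
    rw [he]; exact hlo
  · show p.2 + -(ℓ:ℤ) + (k+1) * ℓ ≤ v i
    have he : p.2 + -(ℓ:ℤ) + (k+1) * ℓ = p.2 + k * ℓ := by ring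
    rw [he]; exact hhi

lemma hatD_row {m ℓ : ℕ} (hm : 1 ≤ m) {v w : ℕ → ℤ} {i : ℕ} (hi : i < m) (b : ℤ) :
    (((i:ℤ) + 1, b)) ∈ hatD m ℓ v w ↔ (w i < b ∧ b ≤ v i) := by
  rw [hatD_mem_iff hm]
  have hd : ((i:ℤ) + 1 : ℤ) = (i:ℤ) + 1 + 0 * m := by ring
  rw [show Lf m ℓ w ((i:ℤ)+1) = w i - 0 * ℓ from Lf_at w hi hd,
    show Lf m ℓ v ((i:ℤ)+1) = v i - 0 * ℓ from Lf_at v hi hd]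
  constructor <;> intro h <;> exact ⟨by linarith [h.1], by linarith [h.2]⟩

lemma hatD_congr {m ℓ : ℕ} {v w v' w' : ℕ → ℤ}
    (h : ∀ i < m, v i = v' i ∧ w i = w' i) : hatD m ℓ v w = hatD m ℓ v' w' := by
  ext p
  constructor
  · rintro ⟨k, i, hi, hp1, hlo, hhi⟩
    exact ⟨k, i, hi, hp1, by rw [← (h i hi).2]; exact hlo, by rw [← (h i hi).1]; exact hhi⟩
  · rintro ⟨k, i, hi, hp1, hlo, hhi⟩
    exact ⟨k, i, hi, hp1, by rw [(h i hi).2]; exact hlo, by rw [(h i hi).1]; exact hhi⟩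

/-- `ω` shifts the diagram diagonally by `(1,1)`. -/
lemma omega_hatD {m ℓ : ℕ} (hm : 1 ≤ m) (v w : ℕ → ℤ) :
    hatD m ℓ (omegaMap m ℓ v) (omegaMap m ℓ w) =
      (fun u : ℤ × ℤ => u + (1, 1)) '' hatD m ℓ v w := by
  ext p
  constructor
  · rintro ⟨k, i, hi, hp1, hlo, hhi⟩
    refine ⟨p - (1,1), ?_, by simp⟩
    rcases Nat.eq_zero_or_pos i with rfl | hpos
    · rw [omegaMap_zero] at hlo hhi
      refine ⟨k - 1, m - 1, by omega, ?_, ?_, ?_⟩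
      · show p.1 - 1 = ((m-1:ℕ):ℤ) + 1 + (k-1) * m
        have hc : ((m-1:ℕ):ℤ) = (m:ℤ) - 1 := by omega
        rw [hc, hp1]; push_cast; ring
      · show (w (m-1) : ℤ) + 1 ≤ p.2 - 1 + (k-1) * ℓ
        push_cast at hlo ⊢
        linarith
      · show p.2 - 1 + (k-1) * ℓ ≤ v (m-1)
        linarith
    · obtain ⟨j, rfl⟩ : ∃ j, i = j + 1 := ⟨i - 1, by omega⟩
      rw [omegaMap_succ] at hlo hhi
      refine ⟨k, j, by omega, ?_, ?_, ?_⟩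
      · show p.1 - 1 = (j:ℤ) + 1 + k * m
        rw [hp1]; push_cast; ring
      · show (w j : ℤ) + 1 ≤ p.2 - 1 + k * ℓ
        linarith
      · show p.2 - 1 + k * ℓ ≤ v j
        linarith
  · rintro ⟨q, ⟨k, i, hi, hq1, hlo, hhi⟩, rfl⟩
    by_cases hcase : i + 1 = m
    · refine ⟨k + 1, 0, by omega, ?_, ?_, ?_⟩
      · show q.1 + 1 = ((0:ℕ):ℤ) + 1 + (k+1) * m
        rw [hq1]
        have hc : ((i:ℕ):ℤ) = (m:ℤ) - 1 := by omega
        push_cast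
        linarith
      · rw [omegaMap_zero]
        show (w (m-1) : ℤ) + ℓ + 1 + 1 ≤ q.2 + 1 + (k+1) * ℓ
        have hc : m - 1 = i := by omega
        rw [hc]
        linarith
      · rw [omegaMap_zero]
        show q.2 + 1 + (k+1) * ℓ ≤ v (m-1) + ℓ + 1
        have hc : m - 1 = i := by omega
        rw [hc]
        linarith
    · refine ⟨k, i + 1, by omega, ?_, ?_, ?_⟩
      · show q.1 + 1 = ((i+1:ℕ):ℤ) + 1 + k * m
        rw [hq1]; push_cast; ring
      · rw [omegaMap_succ]
        show (w i : ℤ) + 1 + 1 ≤ q.2 + 1 + k * ℓ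
        linarith
      · rw [omegaMap_succ]
        show q.2 + 1 + k * ℓ ≤ v i + 1
        linarith

lemma omega_iter_hatD {m ℓ : ℕ} (hm : 1 ≤ m) (v w : ℕ → ℤ) (s : ℕ) :
    hatD m ℓ ((omegaMap m ℓ)^[s] v) ((omegaMap m ℓ)^[s] w) =
      (fun u : ℤ × ℤ => u + ((s:ℤ), (s:ℤ))) '' hatD m ℓ v w := by
  induction s with
  | zero => simp [Prod.mk_zero_zero]
  | succ j ih =>
      rw [Function.iterate_succ_apply', Function.iterate_succ_apply',
        omega_hatD hm, ih, Set.image_image]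
      have hfun : (fun u : ℤ × ℤ => u + ((j:ℤ), (j:ℤ)) + (1, 1)) =
          (fun u : ℤ × ℤ => u + (((j+1:ℕ):ℤ), ((j+1:ℕ):ℤ))) := by
        funext u
        rw [Prod.ext_iff]
        constructor
        · show u.1 + (j:ℤ) + 1 = u.1 + ((j+1:ℕ):ℤ)
          push_cast; ring
        · show u.2 + (j:ℤ) + 1 = u.2 + ((j+1:ℕ):ℤ)
          push_cast; ring
      rw [hfun]
/-! ### An explicit standard tableau on `hatD` -/

def pre (lam mu : ℕ → ℤ) (i : ℕ) : ℤ := ∑ j ∈ Finset.range i, (lam j - mu j)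

def Ttab (n m ℓ : ℕ) (lam mu : ℕ → ℤ) (p : ℤ × ℤ) : ℤ :=
  rowK m p.1 * n + pre lam mu (rowIdx m p.1) + (p.2 + rowK m p.1 * ℓ - mu (rowIdx m p.1))

section construction

variable {n m ℓ : ℕ} {lam mu : ℕ → ℤ}

lemma pre_succ (i : ℕ) : pre lam mu (i+1) = pre lam mu i + (lam i - mu i) :=
  Finset.sum_range_succ _ i

lemma pre_step (h : memJstar n m ℓ lam mu) (i : ℕ) (hi : i < m) : pre lam mu i + 1 ≤ pre lam mu (i+1) := by
  rw [pre_succ]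
  have := h.2.2.2.1 i hi
  linarith

lemma pre_le (h : memJstar n m ℓ lam mu) : ∀ d i : ℕ, i + d ≤ m → pre lam mu i ≤ pre lam mu (i + d) := by
  intro d
  induction d with
  | zero => intro i _; simp
  | succ c ih =>
      intro i hi
      have h1 : pre lam mu i ≤ pre lam mu (i + c) := ih i (by omega)
      have h2 := pre_step h (i + c) (by omega)
      have he : i + (c + 1) = (i + c) + 1 := by omega
      rw [he]
      linarith

lemma pre_mono (h : memJstar n m ℓ lam mu) {i j : ℕ} (hij : i ≤ j) (hj : j ≤ m) :
    pre lam mu i ≤ pre lam mu j := by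
  have := pre_le h (j - i) i (by omega)
  rwa [show i + (j - i) = j by omega] at this

lemma pre_m (h : memJstar n m ℓ lam mu) : pre lam mu m = n := h.2.2.2.2

lemma pre_zero : pre lam mu 0 = 0 := rfl

lemma n_ge_one (h : memJstar n m ℓ lam mu) : 1 ≤ n := by
  have h1 := pre_step h 0 (by have hm := h.1; omega)
  norm_num at h1
  have h2 := pre_mono h (show (1:ℕ) ≤ m from h.1) (le_refl m)
  have h3 := pre_m h
  have h0 := pre_zero (lam := lam) (mu := mu)
  have : (1:ℤ) ≤ n := by omega
  exact_mod_cast this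

lemma Ttab_at {p : ℤ × ℤ} {i : ℕ} {k : ℤ} (hi : i < m)
    (hp : p.1 = (i:ℤ) + 1 + k * m) :
    Ttab n m ℓ lam mu p = k * n + pre lam mu i + (p.2 + k * ℓ - mu i) := by
  obtain ⟨h1, h2⟩ := decomp_unique hi hp
  unfold Ttab
  rw [h1, h2]

/-- range bound for values of cells in the diagram. -/
lemma Ttab_bound (h : memJstar n m ℓ lam mu) {p : ℤ × ℤ} {i : ℕ} {k : ℤ} (hi : i < m)
    (hp : p.1 = (i:ℤ) + 1 + k * m) (hlo : mu i + 1 ≤ p.2 + k * ℓ)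
    (hhi : p.2 + k * ℓ ≤ lam i) :
    k * n + 1 ≤ Ttab n m ℓ lam mu p ∧ Ttab n m ℓ lam mu p ≤ k * n + n := by
  rw [Ttab_at hi hp]
  have h1 : 0 ≤ pre lam mu i := by
    have := pre_mono h (Nat.zero_le i) (le_of_lt hi)
    rwa [pre_zero] at this
  have h2 : pre lam mu i + (p.2 + k * ℓ - mu i) ≤ pre lam mu (i+1) := by
    rw [pre_succ]; linarith
  have h3 : pre lam mu (i+1) ≤ n := by
    have := pre_mono h (show i + 1 ≤ m by omega) (le_refl m)
    rw [pre_m h] at this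
    linarith
  constructor <;> linarith

lemma Ttab_period (h : memJstar n m ℓ lam mu) (p : ℤ × ℤ) :
    Ttab n m ℓ lam mu (p + ((m:ℤ), -(ℓ:ℤ))) = Ttab n m ℓ lam mu p + n := by
  set i := rowIdx m p.1 with hi
  set k := rowK m p.1 with hk
  have hd : p.1 = (i:ℤ) + 1 + k * m := row_decomp h.1 p.1
  have hil : i < m := rowIdx_lt h.1 p.1
  have hd1 : (p + ((m:ℤ), -(ℓ:ℤ))).1 = (i:ℤ) + 1 + (k+1) * m := by
    show p.1 + m = (i:ℤ) + 1 + (k+1) * m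
    rw [hd]; ring
  rw [Ttab_at hil hd1, Ttab_at hil hd]
  show (k+1) * n + pre lam mu i + (p.2 + -(ℓ:ℤ) + (k+1) * ℓ - mu i) = _
  ring

lemma Ttab_rowstep (a b : ℤ) :
    Ttab n m ℓ lam mu (a, b + 1) = Ttab n m ℓ lam mu (a, b) + 1 := by
  unfold Ttab
  show rowK m a * n + _ + (b + 1 + rowK m a * ℓ - _) = _
  ring

lemma Ttab_colstep (h : memJstar n m ℓ lam mu) (a b : ℤ) :
    Ttab n m ℓ lam mu (a, b) < Ttab n m ℓ lam mu (a + 1, b) := by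
  set i := rowIdx m a with hi
  set k := rowK m a with hk
  have hd : a = (i:ℤ) + 1 + k * m := row_decomp h.1 a
  have hil : i < m := rowIdx_lt h.1 a
  have hTa : Ttab n m ℓ lam mu (a, b) = k * n + pre lam mu i + (b + k * ℓ - mu i) :=
    Ttab_at hil hd
  by_cases hcase : i + 1 < m
  · have hd1 : ((a + 1 : ℤ), b).1 = ((i+1:ℕ):ℤ) + 1 + k * m := by
      show a + 1 = ((i+1:ℕ):ℤ) + 1 + k * m
      rw [hd]; push_cast; ring
    rw [Ttab_at hcase hd1, hTa, pre_succ]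
    have hmu := h.2.2.1.1 i (i+1) (by omega) hcase
    have hlm := h.2.2.2.1 i hil
    linarith
  · have him : i = m - 1 := by omega
    have hd1 : ((a + 1 : ℤ), b).1 = ((0:ℕ):ℤ) + 1 + (k+1) * m := by
      show a + 1 = ((0:ℕ):ℤ) + 1 + (k+1) * m
      rw [hd]
      have hc : ((i:ℕ):ℤ) = (m:ℤ) - 1 := by omega
      push_cast
      linarith
    rw [Ttab_at h.1 hd1, hTa]
    have hpm : pre lam mu (i+1) = n := by
      rw [show i + 1 = m by omega, pre_m h]
    have hps := pre_succ (lam := lam) (mu := mu) i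
    rw [hpm] at hps
    have hsp := h.2.2.1.2  -- mu 0 - mu (m-1) ≤ ℓ
    rw [← him] at hsp
    have hlm := h.2.2.2.1 i hil
    have : pre lam mu i = (n:ℤ) - (lam i - mu i) := by linarith
    rw [this]
    show k * n + ((n:ℤ) - (lam i - mu i)) + (b + k * ℓ - mu i) <
      (k+1) * n + pre lam mu 0 + (b + (k+1) * ℓ - mu 0)
    rw [pre_zero]
    push_cast
    nlinarith [hsp, hlm]

lemma Ttab_bij (h : memJstar n m ℓ lam mu) : Set.BijOn (Ttab n m ℓ lam mu) (hatD m ℓ lam mu) Set.univ := by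
  have hn1 : (1:ℤ) ≤ n := by exact_mod_cast n_ge_one h
  refine ⟨fun p _ => Set.mem_univ _, ?_, ?_⟩
  · -- injective
    rintro p ⟨k, i, hi, hp1, hlo, hhi⟩ q ⟨k', i', hi', hq1, hlo', hhi'⟩ heq
    have hbp := Ttab_bound h hi hp1 hlo hhi
    have hbq := Ttab_bound h hi' hq1 hlo' hhi'
    have hkk : k = k' := by
      by_contra hne
      rcases lt_or_gt_of_ne hne with hlt | hgt
      · have : k + 1 ≤ k' := by omega
        have : (k + 1) * n ≤ k' * n := by
          apply mul_le_mul_of_nonneg_right this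
          linarith
        have hx : k * n + n ≤ k' * n := by push_cast at this ⊢; linarith
        omega
      · have : k' + 1 ≤ k := by omega
        have : (k' + 1) * n ≤ k * n := by
          apply mul_le_mul_of_nonneg_right this
          linarith
        have hx : k' * n + n ≤ k * n := by push_cast at this ⊢; linarith
        omega
    subst hkk
    have hTp := Ttab_at (n := n) (ℓ := ℓ) (lam := lam) (mu := mu) hi hp1
    have hTq := Ttab_at (n := n) (ℓ := ℓ) (lam := lam) (mu := mu) hi' hq1
    rw [hTp, hTq] at heq
    have hii : i = i' := by
      by_contra hne
      rcases Nat.lt_or_ge i i' with hlt | hge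
      · have h1 : pre lam mu (i+1) ≤ pre lam mu i' := pre_mono h (by omega) (le_of_lt hi')
        have h2 := pre_succ (lam := lam) (mu := mu) i
        linarith
      · have hlt : i' < i := by omega
        have h1 : pre lam mu (i'+1) ≤ pre lam mu i := pre_mono h (by omega) (le_of_lt hi)
        have h2 := pre_succ (lam := lam) (mu := mu) i'
        linarith
    subst hii
    have hp2 : p.2 = q.2 := by linarith
    have hp1' : p.1 = q.1 := by rw [hp1, hq1]
    exact Prod.ext hp1' hp2
  · -- surjective
    intro t _
    have hn0 : ((n:ℤ)) ≠ 0 := by linarith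
    set k := (t - 1) / (n:ℤ) with hk
    set c := (t - 1) % (n:ℤ) + 1 with hc
    have hmod1 : 0 ≤ (t-1) % (n:ℤ) := Int.emod_nonneg _ hn0
    have hmod2 : (t-1) % (n:ℤ) < n := Int.emod_lt_of_pos _ (by linarith)
    have hct : t = k * n + c := by
      have := Int.mul_ediv_add_emod (t-1) (n:ℤ)
      rw [hc, hk]; linarith
    have hc1 : 1 ≤ c := by omega
    have hcn : c ≤ n := by omega
    have hex : ∃ j : ℕ, c ≤ pre lam mu (j+1) := by
      refine ⟨m - 1, ?_⟩
      rw [show (m - 1) + 1 = m from by have hm := h.1; omega, pre_m h]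
      exact hcn
    set i := Nat.find hex with hi
    have hfind : c ≤ pre lam mu (i+1) := Nat.find_spec hex
    have hilt : i < m := by
      have := Nat.find_min' hex (by
        rw [show (m - 1) + 1 = m from by have hm := h.1; omega, pre_m h]
        exact hcn)
      have hm := h.1
      omega
    have hpre_lt : pre lam mu i < c := by
      rcases Nat.eq_zero_or_pos i with h0 | hpos
      · rw [h0, pre_zero]; linarith
      · obtain ⟨j, hj⟩ : ∃ j, i = j + 1 := ⟨i - 1, by omega⟩
        have := Nat.find_min hex (show j < i by omega)
        rw [← hj] at this
        omega
    refine ⟨((i:ℤ) + 1 + k * m, mu i + (c - pre lam mu i) - k * ℓ), ⟨k, i, hilt, rfl, ?_, ?_⟩, ?_⟩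
    · show mu i + 1 ≤ mu i + (c - pre lam mu i) - k * ℓ + k * ℓ
      linarith
    · show mu i + (c - pre lam mu i) - k * ℓ + k * ℓ ≤ lam i
      have := pre_succ (lam := lam) (mu := mu) i
      linarith
    · have hT := Ttab_at (n := n) (ℓ := ℓ) (lam := lam) (mu := mu) (p := ((i:ℤ) + 1 + k * m, mu i + (c - pre lam mu i) - k * ℓ))
        hilt rfl
      rw [hT]
      show k * n + pre lam mu i + (mu i + (c - pre lam mu i) - k * ℓ + k * ℓ - mu i) = t
      linarith

end construction

/-! ### A content function via choice -/

open Classical in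
noncomputable def contentOf (Λ : Set (ℤ × ℤ)) (T : ℤ × ℤ → ℤ) : ℤ → ℤ := fun t =>
  if h : ∃ p, p ∈ Λ ∧ T p = t then h.choose.2 - h.choose.1 else 0

lemma contentOf_spec {Λ : Set (ℤ × ℤ)} {T : ℤ × ℤ → ℤ}
    (hinj : Set.InjOn T Λ) : IsContent Λ T (contentOf Λ T) := by
  intro u hu
  have hex : ∃ p, p ∈ Λ ∧ T p = T u := ⟨u, hu, rfl⟩
  unfold contentOf
  rw [dif_pos hex]
  have hspec := hex.choose_spec
  have : hex.choose = u := hinj hspec.1 hu hspec.2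
  rw [this]
/-! ### Assembly lemmas -/

lemma mem_image_shift {Y : Set (ℤ × ℤ)} (v p : ℤ × ℤ) :
    p ∈ (fun u : ℤ × ℤ => u + v) '' Y ↔ p - v ∈ Y := by
  constructor
  · rintro ⟨q, hq, rfl⟩
    simpa using hq
  · intro h
    exact ⟨p - v, h, by simp⟩

lemma period_content {n m ℓ : ℕ} {Λ : Set (ℤ × ℤ)} {T : ℤ × ℤ → ℤ} {C : ℤ → ℤ}
    (hT : IsTab n m ℓ Λ T) (hC : IsContent Λ T C)
    (hcl : ∀ p ∈ Λ, p + ((m:ℤ), -(ℓ:ℤ)) ∈ Λ) (t : ℤ) :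
    C (t + n) = C t - (m + ℓ) := by
  set u := cellOf Λ T hT.1.2.2 t with hu
  have humem : u ∈ Λ := cellOf_mem hT.1.2.2 t
  have hTu : T u = t := cellOf_T hT.1.2.2 t
  have h1 : C t = u.2 - u.1 := by rw [← hTu]; exact hC u humem
  have h2 : T (u + ((m:ℤ), -(ℓ:ℤ))) = t + n := by rw [hT.2 u humem, hTu]
  have h3 := hC _ (hcl u humem)
  rw [h2] at h3
  have h4 : (u + ((m:ℤ), -(ℓ:ℤ))).2 - (u + ((m:ℤ), -(ℓ:ℤ))).1 = u.2 - u.1 - (m + ℓ) := by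
    show u.2 + -(ℓ:ℤ) - (u.1 + m) = u.2 - u.1 - (m + ℓ)
    ring
  rw [h4] at h3
  linarith

/-- (a) implies (b). -/
lemma a_implies_b {n m m' ℓ ℓ' : ℕ} {lam mu eta nu : ℕ → ℤ}
    (h1 : memJstar n m ℓ lam mu) (h2 : memJstar n m' ℓ' eta nu)
    (T S : ℤ × ℤ → ℤ) (C : ℤ → ℤ)
    (hT : IsStdTab n m ℓ (hatD m ℓ lam mu) T)
    (hS : IsStdTab n m' ℓ' (hatD m' ℓ' eta nu) S)
    (hCT : IsContent (hatD m ℓ lam mu) T C)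
    (hCS : IsContent (hatD m' ℓ' eta nu) S C) :
    m = m' ∧ ℓ = ℓ' ∧ ∃ r : ℤ,
      hatD m ℓ lam mu = (fun u : ℤ × ℤ => u + (r, r)) '' hatD m' ℓ' eta nu := by
  set E := toDiag n m ℓ lam mu h1 with hE
  set E' := toDiag n m' ℓ' eta nu h2 with hE'
  have hsetE : E.Dset = hatD m ℓ lam mu := toDiag_set h1
  have hsetE' : E'.Dset = hatD m' ℓ' eta nu := toDiag_set h2
  -- transport hypotheses to the abstract diagrams
  have hbij : Set.BijOn T E.Dset Set.univ := by rw [hsetE]; exact hT.1.1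
  have hrow : RowInc E.Dset T := by rw [hsetE]; exact hT.2.1
  have hcol : ColInc E.Dset T := by rw [hsetE]; exact hT.2.2
  have hC : IsContent E.Dset T C := by rw [hsetE]; exact hCT
  have hbij' : Set.BijOn S E'.Dset Set.univ := by rw [hsetE']; exact hS.1.1
  have hrow' : RowInc E'.Dset S := by rw [hsetE']; exact hS.2.1
  have hcol' : ColInc E'.Dset S := by rw [hsetE']; exact hS.2.2
  have hC' : IsContent E'.Dset S C := by rw [hsetE']; exact hCS
  obtain ⟨r, hDD⟩ := core_shift hbij hrow hcol hC hbij' hrow' hcol' hC'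
  -- sum equality from the periodicity of the content function
  have hp1 := period_content hT.1 hCT (fun p hp => hatD_shift_mem hp) 0
  have hp2 := period_content hS.1 hCS (fun p hp => hatD_shift_mem hp) 0
  have hsum : (m:ℤ) + ℓ = (m':ℤ) + ℓ' := by rw [hp1] at hp2; linarith
  -- extract the L-function relation
  have hrows : ∀ a b : ℤ, ((a, b)) ∈ E'.Dset ↔ ((a - r, b - r)) ∈ E.Dset := by
    intro a b
    rw [hDD, mem_image_shift]
    exact Iff.rfl
  have hLrel : ∀ a : ℤ, E'.L a = E.L (a - r) + r := by
    intro a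
    have hmain := interval_eq (x := E'.M a) (y := E'.L a)
      (x' := E.M (a - r) + r) (y' := E.L (a - r) + r) (E'.lt a) ?_
    · exact hmain.2
    · intro b
      rw [show (E'.M a < b ∧ b ≤ E'.L a) ↔ ((a, b)) ∈ E'.Dset from Iff.rfl, hrows a b]
      constructor
      · rintro ⟨hx, hy⟩
        exact ⟨by show E.M (a-r) + r < b; have : E.M (a-r) < b - r := hx; linarith,
          by show b ≤ E.L (a-r) + r; have : b - r ≤ E.L (a-r) := hy; linarith⟩
      · rintro ⟨hx, hy⟩
        exact ⟨show E.M (a-r) < b - r by have : E.M (a-r) + r < b := hx; linarith,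
          show b - r ≤ E.L (a-r) by have : b ≤ E.L (a-r) + r := hy; linarith⟩
  -- periodicity relations of E'.L
  have hper1 : ∀ a : ℤ, E'.L (a + m) = E'.L a - ℓ := by
    intro a
    rw [hLrel, hLrel]
    have : E.L (a + m - r) = E.L (a - r) - ℓ := by
      have := Lf_per (v := lam) (ℓ := ℓ) h1.1 (a - r)
      rw [show a - r + (m:ℤ) = a + m - r from by ring] at this
      exact this
    rw [this]
    ring
  have hper2 : ∀ a : ℤ, E'.L (a + m') = E'.L a - ℓ' := by
    intro a
    exact Lf_per (v := eta) (ℓ := ℓ') h2.1 a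
  have hmm : m = m' := by
    rcases lt_trichotomy m m' with hlt | heq | hgt
    · exfalso
      have hc : (m:ℤ) < m' := by exact_mod_cast hlt
      have h3 : E'.L (0 + m') ≤ E'.L (0 + m) := E'.Lmono (by linarith)
      rw [hper1, hper2] at h3
      have : (ℓ:ℤ) ≤ ℓ' := by linarith
      linarith
    · exact heq
    · exfalso
      have hc : (m':ℤ) < m := by exact_mod_cast hgt
      have h3 : E'.L (0 + m) ≤ E'.L (0 + m') := E'.Lmono (by linarith)
      rw [hper1, hper2] at h3
      have : (ℓ':ℤ) ≤ ℓ := by linarith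
      linarith
  have hll : ℓ = ℓ' := by
    have : (ℓ:ℤ) = ℓ' := by
      have : (m:ℤ) = m' := by exact_mod_cast hmm
      linarith
    exact_mod_cast this
  refine ⟨hmm, hll, -r, ?_⟩
  rw [← hsetE, ← hsetE']
  ext p
  rw [mem_image_shift, hDD, mem_image_shift]
  have he : p - (-r, -r) - (r, r) = p := by
    rw [Prod.ext_iff]
    constructor
    · show p.1 - (-r) - r = p.1; ring
    · show p.2 - (-r) - r = p.2; ring
  rw [he]

/-- (b) implies (a). -/
lemma b_implies_a {n m ℓ : ℕ} {lam mu eta nu : ℕ → ℤ}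
    (h1 : memJstar n m ℓ lam mu) (h2 : memJstar n m ℓ eta nu) (r : ℤ)
    (hD : hatD m ℓ lam mu = (fun u : ℤ × ℤ => u + (r, r)) '' hatD m ℓ eta nu) :
    ∃ (T S : ℤ × ℤ → ℤ) (C : ℤ → ℤ),
      IsStdTab n m ℓ (hatD m ℓ lam mu) T ∧
      IsStdTab n m ℓ (hatD m ℓ eta nu) S ∧
      IsContent (hatD m ℓ lam mu) T C ∧ IsContent (hatD m ℓ eta nu) S C := by
  set T := Ttab n m ℓ lam mu with hTdef
  set C := contentOf (hatD m ℓ lam mu) T with hCdef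
  set S := fun u : ℤ × ℤ => T (u + (r, r)) with hSdef
  have hmem_iff : ∀ u : ℤ × ℤ, u ∈ hatD m ℓ eta nu ↔ u + (r, r) ∈ hatD m ℓ lam mu := by
    intro u
    rw [hD, mem_image_shift]
    simp
  have hTbij := Ttab_bij h1
  have hTstd : IsStdTab n m ℓ (hatD m ℓ lam mu) T := by
    refine ⟨⟨hTbij, fun u _ => Ttab_period h1 u⟩, ?_, ?_⟩
    · intro a b _ _
      rw [hTdef, Ttab_rowstep]
      omega
    · intro a b _ _
      exact Ttab_colstep h1 a b
  have hSstd : IsStdTab n m ℓ (hatD m ℓ eta nu) S := by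
    refine ⟨⟨⟨fun p _ => Set.mem_univ _, ?_, ?_⟩, ?_⟩, ?_, ?_⟩
    · -- injective
      intro u hu v hv heq
      have := hTbij.2.1 ((hmem_iff u).1 hu) ((hmem_iff v).1 hv) heq
      exact add_right_cancel this
    · -- surjective
      intro t _
      obtain ⟨p, hp, hTp⟩ := hTbij.2.2 (Set.mem_univ t)
      refine ⟨p - (r, r), ?_, ?_⟩
      · rw [hmem_iff]
        simpa using hp
      · show T (p - (r, r) + (r, r)) = t
        rw [sub_add_cancel]
        exact hTp
    · -- periodicity
      intro u _
      show T (u + ((m:ℤ), -(ℓ:ℤ)) + (r, r)) = T (u + (r, r)) + n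
      rw [show u + ((m:ℤ), -(ℓ:ℤ)) + (r, r) = (u + (r, r)) + ((m:ℤ), -(ℓ:ℤ)) from by
        rw [add_right_comm]]
      exact Ttab_period h1 _
    · -- row increasing
      intro a b _ _
      show T ((a, b) + (r, r)) < T ((a, b + 1) + (r, r))
      have e1 : ((a, b) : ℤ × ℤ) + (r, r) = (a + r, b + r) := rfl
      have e2 : ((a, b + 1) : ℤ × ℤ) + (r, r) = (a + r, (b + r) + 1) := by
        rw [Prod.ext_iff]
        exact ⟨rfl, by show b + 1 + r = b + r + 1; ring⟩
      rw [e1, e2, hTdef, Ttab_rowstep]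
      omega
    · -- column increasing
      intro a b _ _
      show T ((a, b) + (r, r)) < T ((a + 1, b) + (r, r))
      have e1 : ((a, b) : ℤ × ℤ) + (r, r) = (a + r, b + r) := rfl
      have e2 : ((a + 1, b) : ℤ × ℤ) + (r, r) = ((a + r) + 1, b + r) := by
        rw [Prod.ext_iff]
        exact ⟨by show a + 1 + r = a + r + 1; ring, rfl⟩
      rw [e1, e2]
      exact Ttab_colstep h1 (a + r) (b + r)
  have hCT : IsContent (hatD m ℓ lam mu) T C := contentOf_spec hTbij.2.1
  have hCS : IsContent (hatD m ℓ eta nu) S C := by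
    intro u hu
    have := hCT (u + (r, r)) ((hmem_iff u).1 hu)
    show C (T (u + (r, r))) = u.2 - u.1
    rw [this]
    show u.2 + r - (u.1 + r) = u.2 - u.1
    ring
  exact ⟨T, S, C, hTstd, hSstd, hCT, hCS⟩
/-- (b) implies (c). -/
lemma b_to_c {n m ℓ : ℕ} {lam mu eta nu : ℕ → ℤ}
    (h1 : memJstar n m ℓ lam mu) (h2 : memJstar n m ℓ eta nu) (r : ℤ)
    (hD : hatD m ℓ lam mu = (fun u : ℤ × ℤ => u + (r, r)) '' hatD m ℓ eta nu) :
    ∃ s : ℕ, ((∀ i < m, eta i = (omegaMap m ℓ)^[s] lam i ∧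
        nu i = (omegaMap m ℓ)^[s] mu i) ∨
      (∀ i < m, lam i = (omegaMap m ℓ)^[s] eta i ∧
        mu i = (omegaMap m ℓ)^[s] nu i)) := by
  rcases le_or_gt 0 r with hr | hr
  · refine ⟨r.toNat, Or.inr ?_⟩
    have hs : ((r.toNat : ℕ) : ℤ) = r := Int.toNat_of_nonneg hr
    have hEq : hatD m ℓ lam mu =
        hatD m ℓ ((omegaMap m ℓ)^[r.toNat] eta) ((omegaMap m ℓ)^[r.toNat] nu) := by
      rw [omega_iter_hatD h1.1 eta nu r.toNat, hs]
      exact hD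
    intro i hi
    have hiff : ∀ b : ℤ, (mu i < b ∧ b ≤ lam i) ↔
        (((omegaMap m ℓ)^[r.toNat] nu) i < b ∧ b ≤ ((omegaMap m ℓ)^[r.toNat] eta) i) := by
      intro b
      rw [← hatD_row (w := mu) (v := lam) h1.1 hi b, hEq,
        hatD_row (w := (omegaMap m ℓ)^[r.toNat] nu) (v := (omegaMap m ℓ)^[r.toNat] eta)
          h1.1 hi b]
    have hint := interval_eq (h1.2.2.2.1 i hi) hiff
    exact ⟨hint.2, hint.1⟩
  · refine ⟨(-r).toNat, Or.inl ?_⟩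
    have hs : (((-r).toNat : ℕ) : ℤ) = -r := Int.toNat_of_nonneg (by linarith)
    have hD' : hatD m ℓ eta nu =
        (fun u : ℤ × ℤ => u + (-r, -r)) '' hatD m ℓ lam mu := by
      ext p
      rw [mem_image_shift]
      have hpe : p - (-r, -r) = p + (r, r) := by
        rw [Prod.ext_iff]
        exact ⟨by show p.1 - (-r) = p.1 + r; ring, by show p.2 - (-r) = p.2 + r; ring⟩
      rw [hpe, hD, mem_image_shift]
      have hpp : p + (r, r) - (r, r) = p := by simp
      rw [hpp]
    have hEq : hatD m ℓ eta nu =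
        hatD m ℓ ((omegaMap m ℓ)^[(-r).toNat] lam) ((omegaMap m ℓ)^[(-r).toNat] mu) := by
      rw [omega_iter_hatD h1.1 lam mu (-r).toNat, hs]
      exact hD'
    intro i hi
    have hiff : ∀ b : ℤ, (nu i < b ∧ b ≤ eta i) ↔
        (((omegaMap m ℓ)^[(-r).toNat] mu) i < b ∧
          b ≤ ((omegaMap m ℓ)^[(-r).toNat] lam) i) := by
      intro b
      rw [← hatD_row (w := nu) (v := eta) h1.1 hi b, hEq,
        hatD_row (w := (omegaMap m ℓ)^[(-r).toNat] mu)
          (v := (omegaMap m ℓ)^[(-r).toNat] lam) h1.1 hi b]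
    have hint := interval_eq (h2.2.2.2.1 i hi) hiff
    exact ⟨hint.2, hint.1⟩

/-- (c) implies (b). -/
lemma c_to_b {n m ℓ : ℕ} {lam mu eta nu : ℕ → ℤ}
    (h1 : memJstar n m ℓ lam mu) (h2 : memJstar n m ℓ eta nu) (s : ℕ)
    (hdisj : (∀ i < m, eta i = (omegaMap m ℓ)^[s] lam i ∧
        nu i = (omegaMap m ℓ)^[s] mu i) ∨
      (∀ i < m, lam i = (omegaMap m ℓ)^[s] eta i ∧
        mu i = (omegaMap m ℓ)^[s] nu i)) :
    ∃ r : ℤ, hatD m ℓ lam mu = (fun u : ℤ × ℤ => u + (r, r)) '' hatD m ℓ eta nu := by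
  rcases hdisj with hd | hd
  · refine ⟨-(s:ℤ), ?_⟩
    have hEq : hatD m ℓ eta nu = (fun u : ℤ × ℤ => u + ((s:ℤ), (s:ℤ))) '' hatD m ℓ lam mu := by
      rw [hatD_congr hd]
      exact omega_iter_hatD h1.1 lam mu s
    ext p
    rw [mem_image_shift, hEq, mem_image_shift]
    have hpe : p - (-(s:ℤ), -(s:ℤ)) - ((s:ℤ), (s:ℤ)) = p := by
      rw [Prod.ext_iff]
      exact ⟨by show p.1 - (-(s:ℤ)) - s = p.1; ring, by show p.2 - (-(s:ℤ)) - s = p.2; ring⟩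
    rw [hpe]
  · refine ⟨(s:ℤ), ?_⟩
    rw [hatD_congr hd]
    exact omega_iter_hatD h1.1 eta nu s
end DSE
/-- for `(λ,μ) ∈ 𝒥*_{m,ℓ}` and `(η,ν) ∈ 𝒥*_{m',ℓ'}`, the
following are equivalent: (a) some standard tableaux on `λ/μ^` and `η/ν^` have
the same content function; (b) `m = m'`, `ℓ = ℓ'`, and `λ/μ^ = η/ν^ + (r,r)`
for some `r ∈ ℤ`; (c) `m = m'`, `ℓ = ℓ'`, and `(η,ν) = ω_m^r · (λ,μ)` for some
`r ∈ ℤ` (equivalently, one pair is a nonnegative `ω_m`-power of the other). -/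
theorem diagonal_shift_equiv (n m m' ℓ ℓ' : ℕ) (hn : 2 ≤ n)
    (lam mu eta nu : ℕ → ℤ)
    (h1 : memJstar n m ℓ lam mu) (h2 : memJstar n m' ℓ' eta nu) :
    ((∃ (T S : ℤ × ℤ → ℤ) (C : ℤ → ℤ),
        IsStdTab n m ℓ (hatD m ℓ lam mu) T ∧
        IsStdTab n m' ℓ' (hatD m' ℓ' eta nu) S ∧
        IsContent (hatD m ℓ lam mu) T C ∧ IsContent (hatD m' ℓ' eta nu) S C) ↔
      (m = m' ∧ ℓ = ℓ' ∧ ∃ r : ℤ,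
        hatD m ℓ lam mu = (fun u : ℤ × ℤ => u + (r, r)) '' hatD m' ℓ' eta nu)) ∧
    ((m = m' ∧ ℓ = ℓ' ∧ ∃ r : ℤ,
        hatD m ℓ lam mu = (fun u : ℤ × ℤ => u + (r, r)) '' hatD m' ℓ' eta nu) ↔
      (m = m' ∧ ℓ = ℓ' ∧ ∃ r : ℕ,
        ((∀ i < m, eta i = (omegaMap m ℓ)^[r] lam i ∧
            nu i = (omegaMap m ℓ)^[r] mu i) ∨
         (∀ i < m, lam i = (omegaMap m ℓ)^[r] eta i ∧
            mu i = (omegaMap m ℓ)^[r] nu i)))) := by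
  constructor
  · constructor
    · rintro ⟨T, S, C, hT, hS, hCT, hCS⟩
      exact DSE.a_implies_b h1 h2 T S C hT hS hCT hCS
    · rintro ⟨rfl, rfl, r, hD⟩
      exact DSE.b_implies_a h1 h2 r hD
  · constructor
    · rintro ⟨rfl, rfl, r, hD⟩
      exact ⟨rfl, rfl, DSE.b_to_c h1 h2 r hD⟩
    · rintro ⟨rfl, rfl, s, hdisj⟩
      exact ⟨rfl, rfl, DSE.c_to_b h1 h2 s hdisj⟩
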